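/- Let u be a C² convex function on a bounded convex domain Ω ⊂ ℝ^n with u(0)=0, Du(0)=0 in Ω and u = 1 on ∂Ω, and suppose Ω satisfies γ^{-1}B_R(x₀) ⊂ Ω ⊂ γB_R(x₀). Then R^{-n} ≤ ω_n^{-1} γ^n ∫_Ω det(D²u) dx, where ω_n is the volume of the unit ball. -/

import Mathlib

open MeasureTheory Filter Bornology Metric Set
open scoped RealInnerProductSpace ENNReal
open Topology Matrix

noncomputable section

/-- Hessian matrix of `u` at `x`. -/
def hess {n : ℕ} (u : EuclideanSpace ℝ (Fin n) → ℝ) (x : EuclideanSpace ℝ (Fin n)) :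
    Matrix (Fin n) (Fin n) ℝ :=
  fun i j => iteratedFDeriv ℝ 2 u x ![EuclideanSpace.single i 1, EuclideanSpace.single j 1]

/-- `k`-th elementary symmetric function of the eigenvalues of a matrix,
computed as the sum of its principal `k × k` minors. -/
def Smat {n : ℕ} (k : ℕ) (M : Matrix (Fin n) (Fin n) ℝ) : ℝ :=
  ∑ s ∈ Finset.univ.powersetCard k, (M.submatrix (Subtype.val : s → Fin n) Subtype.val).det

section Aux

variable {E : Type*} [NormedAddCommGroup E] [InnerProductSpace ℝ E]

lemma key_inner (r : ℝ) (hr : 0 < r) (w x p : E) (hw : ‖w‖ < r) (hx : ‖x - w‖ ≤ r)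
    (hp : ‖p + (r^2 - ‖w‖^2)⁻¹ • w‖ < (Real.sqrt (r^2 - ‖w‖^2))⁻¹) : ⟪p, x⟫ < 1 := by
  set δ : ℝ := r^2 - ‖w‖^2 with hδdef
  have hδ : 0 < δ := by nlinarith [norm_nonneg w]
  have hsq : Real.sqrt δ ^ 2 = δ := Real.sq_sqrt hδ.le
  have hsqpos : 0 < Real.sqrt δ := Real.sqrt_pos.2 hδ
  rcases eq_or_ne x 0 with rfl | hx0
  · simp
  · have hxn : 0 < ‖x‖ := norm_pos_iff.2 hx0
    have h1 : ⟪p + δ⁻¹ • w, x⟫ ≤ ‖p + δ⁻¹ • w‖ * ‖x‖ := real_inner_le_norm _ _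
    have h1' : ‖p + δ⁻¹ • w‖ * ‖x‖ < (Real.sqrt δ)⁻¹ * ‖x‖ :=
      mul_lt_mul_of_pos_right hp hxn
    have h2 : ‖x - w‖^2 = ‖x‖^2 - 2 * ⟪x, w⟫ + ‖w‖^2 := norm_sub_sq_real x w
    have h2' : ‖x - w‖^2 ≤ r^2 := by nlinarith [norm_nonneg (x - w)]
    have hcomm : ⟪w, x⟫ = ⟪x, w⟫ := real_inner_comm x w
    have h3 : (Real.sqrt δ)⁻¹ * ‖x‖ ≤ (δ⁻¹ * ‖x‖^2 + 1)/2 := by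
      have key : 0 ≤ (‖x‖ / Real.sqrt δ - 1)^2 := sq_nonneg _
      have h4 : ‖x‖ / Real.sqrt δ = (Real.sqrt δ)⁻¹ * ‖x‖ := by ring
      have h5 : (‖x‖ / Real.sqrt δ)^2 = δ⁻¹ * ‖x‖^2 := by
        rw [div_pow, hsq]; ring
      nlinarith
    have hexp : ⟪p + δ⁻¹ • w, x⟫ = ⟪p, x⟫ + δ⁻¹ * ⟪w, x⟫ := by
      rw [inner_add_left, real_inner_smul_left]
    have hδi : 0 < δ⁻¹ := inv_pos.2 hδ
    have hwx : ‖w‖^2 + ‖x‖^2 - r^2 ≤ 2 * ⟪w, x⟫ := by nlinarith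
    have hone : δ⁻¹ * (r^2 - ‖w‖^2) = 1 := inv_mul_cancel₀ hδ.ne'
    have hmul := mul_le_mul_of_nonneg_left hwx hδi.le
    have hdist : δ⁻¹ * (‖w‖^2 + ‖x‖^2 - r^2)
        = δ⁻¹ * ‖w‖^2 + δ⁻¹ * ‖x‖^2 - δ⁻¹ * r^2 := by ring
    have hdist2 : δ⁻¹ * (r^2 - ‖w‖^2) = δ⁻¹ * r^2 - δ⁻¹ * ‖w‖^2 := by ring
    linarith

lemma second_nonneg (s : Set E) (u : E → ℝ) (hu : ContDiff ℝ 2 u)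
    (hconv : ConvexOn ℝ s u) (x : E) (hx : x ∈ interior s) (ξ : E) :
    0 ≤ fderiv ℝ (fderiv ℝ u) x ξ ξ := by
  obtain ⟨ε', hε', hball⟩ := Metric.isOpen_iff.1 isOpen_interior x hx
  set ε : ℝ := ε' / (‖ξ‖ + 1) with hε
  have hξ1 : (0:ℝ) < ‖ξ‖ + 1 := by positivity
  have hεpos : 0 < ε := div_pos hε' hξ1
  set g : ℝ → ℝ := fun t => u (x + t • ξ) with hg
  have hmem : ∀ t : ℝ, |t| < ε → x + t • ξ ∈ s := by
    intro t ht
    apply interior_subset; apply hball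
    simp only [Metric.mem_ball, dist_eq_norm, add_sub_cancel_left, norm_smul,
      Real.norm_eq_abs]
    calc |t| * ‖ξ‖ ≤ |t| * (‖ξ‖ + 1) := by
          apply mul_le_mul_of_nonneg_left (by linarith) (abs_nonneg t)
      _ < ε * (‖ξ‖ + 1) := by exact mul_lt_mul_of_pos_right ht hξ1
      _ ≤ ε' := by rw [hε]; field_simp; exact le_rfl
  -- g is convex on the ball
  have hA : ∀ t : ℝ, HasDerivAt (fun τ : ℝ => x + τ • ξ) ξ t := by
    intro t
    simpa using ((hasDerivAt_id t).smul_const ξ).const_add x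
  set A : ℝ →ᵃ[ℝ] E := AffineMap.lineMap x (x + ξ) with hA'
  have hgA : g = u ∘ A := by
    funext t
    simp [hg, hA', AffineMap.lineMap_apply, add_sub_cancel_left]
    rw [add_comm]
  have hgc : ConvexOn ℝ (Metric.ball (0:ℝ) ε) g := by
    rw [hgA]
    refine ((hconv.comp_affineMap A).subset ?_ (convex_ball _ _))
    intro t ht
    simp only [Set.mem_preimage, hA', AffineMap.lineMap_apply]
    have : x + t • ξ ∈ s := hmem t (by simpa [Real.norm_eq_abs] using mem_ball_zero_iff.1 ht)
    simpa [add_sub_cancel_left, add_comm] using this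
  have hud : Differentiable ℝ u := hu.differentiable (by norm_num)
  have hg1 : ∀ t : ℝ, HasDerivAt g (fderiv ℝ u (x + t • ξ) ξ) t := by
    intro t
    exact ((hud (x + t • ξ)).hasFDerivAt).comp_hasDerivAt t (hA t)
  have hmono : MonotoneOn (deriv g) (Metric.ball (0:ℝ) ε) :=
    hgc.monotoneOn_deriv (fun t _ => (hg1 t).differentiableAt)
  have hderiv_eq : deriv g = fun t => fderiv ℝ u (x + t • ξ) ξ := by
    funext t; exact (hg1 t).deriv
  -- second derivative
  have hB : HasFDerivAt (fderiv ℝ u) (fderiv ℝ (fderiv ℝ u) x) x := by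
    have h1 : ContDiff ℝ 1 (fderiv ℝ u) := hu.fderiv_right (le_refl _)
    exact ((h1.differentiable (by norm_num)) x).hasFDerivAt
  have hstep1 : HasDerivAt (fun t : ℝ => fderiv ℝ u (x + t • ξ))
      (fderiv ℝ (fderiv ℝ u) x ξ) 0 := by
    have hx0 : x + (0:ℝ) • ξ = x := by simp
    have hB' : HasFDerivAt (fderiv ℝ u) (fderiv ℝ (fderiv ℝ u) x) (x + (0:ℝ) • ξ) := by
      rw [hx0]; exact hB
    exact hB'.comp_hasDerivAt 0 (hA 0)
  have hstep2 : HasDerivAt (fun t : ℝ => fderiv ℝ u (x + t • ξ) ξ)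
      (fderiv ℝ (fderiv ℝ u) x ξ ξ) 0 := by
    have := hstep1.clm_apply (hasDerivAt_const 0 ξ)
    simpa using this
  have hD : HasDerivAt (deriv g) (fderiv ℝ (fderiv ℝ u) x ξ ξ) 0 := by
    rw [hderiv_eq]; exact hstep2
  -- positivity from monotonicity
  have htend := hasDerivAt_iff_tendsto_slope.1 hD
  have htend' : Tendsto (slope (deriv g) 0) (𝓝[>] 0) (𝓝 (fderiv ℝ (fderiv ℝ u) x ξ ξ)) :=
    htend.mono_left (nhdsWithin_mono 0 (fun t ht => ne_of_gt ht))
  refine ge_of_tendsto htend' ?_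
  filter_upwards [Ioo_mem_nhdsGT_of_mem (Set.mem_Ico.2 ⟨le_refl 0, hεpos⟩)] with t ht
  have h0mem : (0:ℝ) ∈ Metric.ball (0:ℝ) ε := by simpa using hεpos
  have htmem : t ∈ Metric.ball (0:ℝ) ε := by
    simp only [Metric.mem_ball, dist_zero_right, Real.norm_eq_abs]
    rw [abs_of_pos ht.1]; exact ht.2
  have hm := hmono h0mem htmem ht.1.le
  rw [slope_def_field]
  apply div_nonneg (by linarith) (by linarith [ht.1])

end Aux

section Aux2

variable {E : Type*} [NormedAddCommGroup E] [InnerProductSpace ℝ E] [FiniteDimensional ℝ E]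

lemma grad_surj (Ω : Set E) (hΩo : IsOpen Ω) (hΩb : IsBounded Ω)
    (h0Ω : (0 : E) ∈ Ω) (u : E → ℝ) (hu : ContDiff ℝ 2 u) (h0 : u 0 = 0)
    (hbd : ∀ x ∈ frontier Ω, u x = 1)
    (p : E) (hp : ∀ x ∈ closure Ω, ⟪p, x⟫ < 1) : p ∈ gradient u '' Ω := by
  have hcpt : IsCompact (closure Ω) := hΩb.isCompact_closure
  set v := fun x : E => u x - ⟪p, x⟫ with hv
  have hvc : Continuous v := hu.continuous.sub (continuous_const.inner continuous_id)
  obtain ⟨z, hzmem, hzmin⟩ :=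
    hcpt.exists_isMinOn ⟨0, subset_closure h0Ω⟩ hvc.continuousOn
  have hv0 : v 0 = 0 := by simp [hv, h0]
  have hzΩ : z ∈ Ω := by
    by_contra h
    have hfr : z ∈ frontier Ω := by
      rw [hΩo.frontier_eq]; exact ⟨hzmem, h⟩
    have h1 : v z = 1 - ⟪p, z⟫ := by simp [hv, hbd z hfr]
    have h2 : ⟪p, z⟫ < 1 := hp z hzmem
    have h3 : v z ≤ v 0 := hzmin (subset_closure h0Ω)
    rw [hv0] at h3
    linarith
  have hloc : IsLocalMin v z :=
    hzmin.isLocalMin (Filter.mem_of_superset (hΩo.mem_nhds hzΩ) subset_closure)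
  have hd : HasFDerivAt u (fderiv ℝ u z) z :=
    ((hu.differentiable (by norm_num)) z).hasFDerivAt
  have hdv : HasFDerivAt v (fderiv ℝ u z - innerSL ℝ p) z :=
    hd.sub ((innerSL ℝ p).hasFDerivAt)
  have h0' := hloc.hasFDerivAt_eq_zero hdv
  have heq : fderiv ℝ u z = innerSL ℝ p := by rwa [sub_eq_zero] at h0'
  refine ⟨z, hzΩ, ?_⟩
  have h2 : innerSL ℝ p = InnerProductSpace.toDual ℝ E p := by
    ext y; simp [InnerProductSpace.toDual_apply_apply]
  rw [gradient, heq, h2, LinearIsometryEquiv.symm_apply_apply]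

end Aux2

section Aux3

variable {n : ℕ}

lemma hess_eq (u : EuclideanSpace ℝ (Fin n) → ℝ) (x : EuclideanSpace ℝ (Fin n)) (i j : Fin n) :
    hess u x i j = fderiv ℝ (fderiv ℝ u) x (EuclideanSpace.single i 1)
      (EuclideanSpace.single j 1) := by
  rw [hess, iteratedFDeriv_two_apply]
  simp

/-- The derivative of the gradient map. -/
def Tmap (u : EuclideanSpace ℝ (Fin n) → ℝ) (x : EuclideanSpace ℝ (Fin n)) :
    EuclideanSpace ℝ (Fin n) →L[ℝ] EuclideanSpace ℝ (Fin n) :=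
  ((InnerProductSpace.toDual ℝ (EuclideanSpace ℝ (Fin n))).symm.toContinuousLinearEquiv :
      (EuclideanSpace ℝ (Fin n) →L[ℝ] ℝ) ≃L[ℝ]
        EuclideanSpace ℝ (Fin n)).toContinuousLinearMap.comp
    (fderiv ℝ (fderiv ℝ u) x)

lemma grad_hasFDerivAt (u : EuclideanSpace ℝ (Fin n) → ℝ) (hu : ContDiff ℝ 2 u)
    (x : EuclideanSpace ℝ (Fin n)) : HasFDerivAt (gradient u) (Tmap u x) x := by
  have h1 : ContDiff ℝ 1 (fderiv ℝ u) := hu.fderiv_right (le_refl _)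
  have hB : HasFDerivAt (fderiv ℝ u) (fderiv ℝ (fderiv ℝ u) x) x :=
    ((h1.differentiable (by norm_num)) x).hasFDerivAt
  have := (((InnerProductSpace.toDual ℝ
      (EuclideanSpace ℝ (Fin n))).symm.toContinuousLinearEquiv :
      (EuclideanSpace ℝ (Fin n) →L[ℝ] ℝ) ≃L[ℝ]
        EuclideanSpace ℝ (Fin n)).toContinuousLinearMap).hasFDerivAt.comp x hB
  exact this

lemma Tmap_det (u : EuclideanSpace ℝ (Fin n) → ℝ) (x : EuclideanSpace ℝ (Fin n)) :
    (Tmap u x).det = (hess u x).det := by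
  classical
  set b := (EuclideanSpace.basisFun (Fin n) ℝ).toBasis with hb
  have hmat : LinearMap.toMatrix b b ((Tmap u x) : _ →ₗ[ℝ] _) = (hess u x)ᵀ := by
    ext i j
    rw [LinearMap.toMatrix_apply]
    have hbj : b j = EuclideanSpace.single j 1 := by
      rw [hb, OrthonormalBasis.coe_toBasis, EuclideanSpace.basisFun_apply]
    have hrepr : ∀ v : EuclideanSpace ℝ (Fin n), b.repr v i = v i := by
      intro v
      rw [hb, OrthonormalBasis.coe_toBasis_repr_apply, EuclideanSpace.basisFun_repr]
    rw [hbj, hrepr]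
    have : (Tmap u x) (EuclideanSpace.single j 1) =
        (InnerProductSpace.toDual ℝ (EuclideanSpace ℝ (Fin n))).symm
          (fderiv ℝ (fderiv ℝ u) x (EuclideanSpace.single j 1)) := rfl
    rw [ContinuousLinearMap.coe_coe, this]
    have hval : ∀ w : EuclideanSpace ℝ (Fin n), w i = ⟪w, EuclideanSpace.single i 1⟫ := by
      intro w
      rw [EuclideanSpace.inner_single_right]
      simp
    rw [hval ((InnerProductSpace.toDual ℝ (EuclideanSpace ℝ (Fin n))).symm
      ((fderiv ℝ (fderiv ℝ u) x) (EuclideanSpace.single j 1))), InnerProductSpace.toDual_symm_apply]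
    rw [Matrix.transpose_apply, hess_eq]
  have := LinearMap.det_toMatrix b ((Tmap u x) : _ →ₗ[ℝ] _)
  rw [ContinuousLinearMap.det, ← this, hmat, Matrix.det_transpose]

lemma hess_posSemidef (s : Set (EuclideanSpace ℝ (Fin n))) (u : EuclideanSpace ℝ (Fin n) → ℝ)
    (hu : ContDiff ℝ 2 u) (hconv : ConvexOn ℝ s u) (x : EuclideanSpace ℝ (Fin n))
    (hx : x ∈ interior s)
    (hsec : ∀ ξ : EuclideanSpace ℝ (Fin n), 0 ≤ fderiv ℝ (fderiv ℝ u) x ξ ξ) :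
    (hess u x).PosSemidef := by
  classical
  have hherm : (hess u x).IsHermitian := by
    have hsymm : IsSymmSndFDerivAt ℝ u x :=
      (hu.contDiffAt).isSymmSndFDerivAt (by norm_num)
    ext i j
    rw [Matrix.conjTranspose_apply, hess_eq, hess_eq]
    simpa using (hsymm (EuclideanSpace.single i 1) (EuclideanSpace.single j 1)).symm
  have hsymmM : ∀ i j, hess u x j i = hess u x i j := by
    intro i j
    have := congrFun (congrFun hherm i) j
    simpa [Matrix.conjTranspose_apply] using this
  refine Matrix.PosSemidef.of_dotProduct_mulVec_nonneg hherm fun v => ?_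
  set ξ : EuclideanSpace ℝ (Fin n) :=
    ∑ i : Fin n, v i • EuclideanSpace.single i 1 with hξ
  have hquad : fderiv ℝ (fderiv ℝ u) x ξ ξ
      = ∑ i : Fin n, v i * ∑ j : Fin n, v j * hess u x j i := by
    rw [hξ]
    simp only [map_sum, _root_.map_smul, ContinuousLinearMap.sum_apply,
      ContinuousLinearMap.smul_apply, ContinuousLinearMap.coe_sum',
      ContinuousLinearMap.coe_smul', Finset.sum_apply, Pi.smul_apply, smul_eq_mul]
    refine Finset.sum_congr rfl fun i _ => ?_
    congr 1
    refine Finset.sum_congr rfl fun j _ => ?_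
    rw [hess_eq]
  have h2 : dotProduct (star v) ((hess u x) *ᵥ v)
      = ∑ i : Fin n, v i * ∑ j : Fin n, v j * hess u x j i := by
    simp only [dotProduct, Matrix.mulVec, star_trivial]
    refine Finset.sum_congr rfl fun i _ => ?_
    congr 1
    refine Finset.sum_congr rfl fun j _ => ?_
    rw [hsymmM]; ring
  rw [h2, ← hquad]
  exact hsec ξ

lemma psd_det_nonneg {m : ℕ} {M : Matrix (Fin m) (Fin m) ℝ} (hM : M.PosSemidef) :
    0 ≤ M.det := by
  rw [hM.isHermitian.det_eq_prod_eigenvalues]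
  apply Finset.prod_nonneg
  intro i _
  simpa using hM.eigenvalues_nonneg i

end Aux3

theorem radius_lower_bound_by_hessian_integral (n : ℕ) (hn : 0 < n)
    (Ω : Set (EuclideanSpace ℝ (Fin n))) (hΩo : IsOpen Ω) (hΩc : Convex ℝ Ω)
    (hΩb : IsBounded Ω) (h0Ω : (0 : EuclideanSpace ℝ (Fin n)) ∈ Ω)
    (u : EuclideanSpace ℝ (Fin n) → ℝ) (hu : ContDiff ℝ 2 u)
    (hconv : ConvexOn ℝ (closure Ω) u)
    (h0 : u 0 = 0) (hg : gradient u 0 = 0)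
    (hbd : ∀ x ∈ frontier Ω, u x = 1)
    (γ R : ℝ) (x₀ : EuclideanSpace ℝ (Fin n)) (hγ : 1 ≤ γ) (hR : 0 < R)
    (hball₁ : Metric.ball x₀ (γ⁻¹ * R) ⊆ Ω) (hball₂ : Ω ⊆ Metric.ball x₀ (γ * R)) :
    R ^ (-(n : ℝ)) ≤
      ((volume (Metric.ball (0 : EuclideanSpace ℝ (Fin n)) 1)).toReal)⁻¹ * γ ^ n *
        ∫ x in Ω, (hess u x).det := by
  haveI : Nonempty (Fin n) := ⟨⟨0, hn⟩⟩
  haveI : Nontrivial (EuclideanSpace ℝ (Fin n)) := by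
    infer_instance
  have hγ0 : (0:ℝ) < γ := lt_of_lt_of_le one_pos hγ
  set r : ℝ := γ * R with hrdef
  have hr : 0 < r := mul_pos hγ0 hR
  have hw : ‖x₀‖ < r := by
    have := hball₂ h0Ω
    rw [Metric.mem_ball, dist_eq_norm, zero_sub, norm_neg] at this
    exact this
  set δ : ℝ := r^2 - ‖x₀‖^2 with hδdef
  have hδ : 0 < δ := by nlinarith [norm_nonneg x₀]
  have hsqδ : 0 < Real.sqrt δ := Real.sqrt_pos.2 hδ
  set s : ℝ := (Real.sqrt δ)⁻¹ with hsdef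
  have hs : 0 < s := inv_pos.2 hsqδ
  set c : EuclideanSpace ℝ (Fin n) := -(δ⁻¹ • x₀) with hcdef
  -- the ball of radius s is in the gradient image
  have hclos : closure Ω ⊆ Metric.closedBall x₀ r := by
    have h1 := closure_mono hball₂
    rwa [closure_ball x₀ hr.ne'] at h1
  have hsub : Metric.ball c s ⊆ gradient u '' Ω := by
    intro p hp
    apply grad_surj Ω hΩo hΩb h0Ω u hu h0 hbd p
    intro x hxcl
    apply key_inner r hr x₀ x p hw
    · have := hclos hxcl
      rwa [Metric.mem_closedBall, dist_eq_norm] at this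
    · rw [Metric.mem_ball, dist_eq_norm, hcdef, sub_neg_eq_add] at hp
      exact hp
  -- measure estimates
  have hmeas : MeasurableSet Ω := hΩo.measurableSet
  have hforall : ∀ x ∈ Ω, HasFDerivWithinAt (gradient u) (Tmap u x) Ω x :=
    fun x _ => (grad_hasFDerivAt u hu x).hasFDerivWithinAt
  have himage := addHaar_image_le_lintegral_abs_det_fderiv volume hmeas hforall
  have hdet_nonneg : ∀ x ∈ Ω, 0 ≤ (hess u x).det := by
    intro x hx
    have hxint : x ∈ interior (closure Ω) :=
      interior_mono subset_closure (by rwa [hΩo.interior_eq])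
    exact psd_det_nonneg (hess_posSemidef (closure Ω) u hu hconv x hxint
      (fun ξ => second_nonneg (closure Ω) u hu hconv x hxint ξ))
  have hdetEq : ∀ x ∈ Ω, |(Tmap u x).det| = (hess u x).det := by
    intro x hx
    rw [Tmap_det, abs_of_nonneg (hdet_nonneg x hx)]
  have hlin : ∫⁻ x in Ω, ENNReal.ofReal |(Tmap u x).det|
      = ∫⁻ x in Ω, ENNReal.ofReal ((hess u x).det) := by
    apply setLIntegral_congr_fun hmeas
    exact fun x hx => by simp only [hdetEq x hx]
  -- integrability
  have hcont : Continuous fun x => (hess u x).det := by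
    apply Continuous.matrix_det
    apply continuous_matrix
    intro i j
    have hC : Continuous (fderiv ℝ (fderiv ℝ u)) :=
      (hu.fderiv_right (m := 1) (le_refl _)).continuous_fderiv (by norm_num)
    have : Continuous fun x => fderiv ℝ (fderiv ℝ u) x (EuclideanSpace.single i 1)
        (EuclideanSpace.single j 1) :=
      (hC.clm_apply continuous_const).clm_apply continuous_const
    simpa [hess, iteratedFDeriv_two_apply] using this
  have hint : IntegrableOn (fun x => (hess u x).det) Ω volume := by
    apply IntegrableOn.mono_set _ subset_closure
    exact hcont.continuousOn.integrableOn_compact hΩb.isCompact_closure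
  have hInonneg : 0 ≤ ∫ x in Ω, (hess u x).det :=
    setIntegral_nonneg hmeas hdet_nonneg
  have hofReal : ENNReal.ofReal (∫ x in Ω, (hess u x).det)
      = ∫⁻ x in Ω, ENNReal.ofReal ((hess u x).det) := by
    apply ofReal_integral_eq_lintegral_ofReal hint
    exact (ae_restrict_iff' hmeas).2 (ae_of_all _ hdet_nonneg)
  set V : ℝ≥0∞ := volume (Metric.ball (0 : EuclideanSpace ℝ (Fin n)) 1) with hV
  have hball_vol : volume (Metric.ball c s) = ENNReal.ofReal (s ^ n) * V := by
    rw [Measure.addHaar_ball volume c hs.le]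
    simp [hV]
  have hchain : ENNReal.ofReal (s ^ n) * V
      ≤ ENNReal.ofReal (∫ x in Ω, (hess u x).det) := by
    rw [← hball_vol, hofReal, ← hlin]
    exact le_trans (measure_mono hsub) himage
  have hVpos : 0 < V.toReal := by
    apply ENNReal.toReal_pos
    · exact (measure_ball_pos volume _ one_pos).ne'
    · exact (measure_ball_lt_top).ne
  have hVne : V ≠ ⊤ := measure_ball_lt_top.ne
  -- pass to real numbers
  have hreal : s ^ n * V.toReal ≤ ∫ x in Ω, (hess u x).det := by
    have := ENNReal.toReal_mono (ENNReal.ofReal_ne_top) hchain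
    rw [ENNReal.toReal_mul, ENNReal.toReal_ofReal (by positivity),
      ENNReal.toReal_ofReal hInonneg] at this
    exact this
  -- compare s with r⁻¹
  have hsr : r⁻¹ ≤ s := by
    rw [hsdef]
    apply inv_anti₀ hsqδ
    calc Real.sqrt δ ≤ Real.sqrt (r^2) := Real.sqrt_le_sqrt (by nlinarith [norm_nonneg x₀])
      _ = r := Real.sqrt_sq hr.le
  have hfin : (r⁻¹) ^ n * V.toReal ≤ ∫ x in Ω, (hess u x).det := by
    refine le_trans ?_ hreal
    apply mul_le_mul_of_nonneg_right _ hVpos.le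
    exact pow_le_pow_left₀ (by positivity) hsr n
  rw [Real.rpow_neg hR.le, Real.rpow_natCast]
  have hrpow : (r⁻¹) ^ n = (γ ^ n)⁻¹ * (R ^ n)⁻¹ := by
    rw [hrdef, mul_inv, mul_pow, inv_pow, inv_pow]
  calc (R ^ n)⁻¹ = V.toReal⁻¹ * γ ^ n * ((r⁻¹)^n * V.toReal) := by
        rw [hrpow]
        have h1 : V.toReal ≠ 0 := hVpos.ne'
        have h2 : γ^n ≠ 0 := (pow_pos hγ0 n).ne'
        have h3 : R^n ≠ 0 := (pow_pos hR n).ne'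
        field_simp
    _ ≤ V.toReal⁻¹ * γ ^ n * ∫ x in Ω, (hess u x).det := by
        apply mul_le_mul_of_nonneg_left hfin
        positivity
end
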